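/- For any positive integers Y₀, B₀, α, β, γ and any p ∈ (0,1], the proportion of yellow balls X_n = Y_n/(Y_n + B_n) in the mixed Friedman–Pólya urn converges almost surely to 1/2 as n → ∞. -/

import Mathlib

open MeasureTheory ProbabilityTheory Filter

/-- The proportion of "yellow" balls at time `n`: `X n = Y n / (Y n + B n)`. -/
noncomputable def urnX {Ω : Type*} (Y B : ℕ → Ω → ℕ) (n : ℕ) (ω : Ω) : ℝ :=
  (Y n ω : ℝ) / ((Y n ω : ℝ) + (B n ω : ℝ))

/-- The mixed Friedman–Pólya urn scheme: with probability `p` balls are replaced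
according to Friedman's scheme (`a` of the drawn colour, `b` of the opposite colour),
and with probability `1 - p` according to Pólya's scheme (`g` of the drawn colour). -/
structure MixedUrn {Ω : Type*} [m0 : MeasurableSpace Ω] (μ : Measure Ω)
    (Y0 B0 a b g : ℕ) (p : ℝ) where
  /-- the filtration -/
  F : Filtration ℕ m0
  /-- `ξ n = 1` iff Friedman's scheme is used at draw `n` -/
  ξ : ℕ → Ω → ℕ
  /-- `ζ n = 1` iff a yellow ball is drawn at draw `n` -/
  ζ : ℕ → Ω → ℕ
  /-- number of yellow balls -/
  Y : ℕ → Ω → ℕ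
  /-- number of blue balls -/
  B : ℕ → Ω → ℕ
  xi_meas : ∀ n, Measurable (ξ n)
  xi_binary : ∀ n ω, ξ n ω ≤ 1
  zeta_binary : ∀ n ω, ζ n ω ≤ 1
  zeta_adapted : ∀ n, 1 ≤ n → Measurable[F n] (ζ n)
  Y_adapted : ∀ n, Measurable[F n] (Y n)
  B_adapted : ∀ n, Measurable[F n] (B n)
  Y_init : ∀ ω, Y 0 ω = Y0
  B_init : ∀ ω, B 0 ω = B0
  /-- the `ξ n` are Bernoulli(`p`) -/
  xi_bernoulli : ∀ n, 1 ≤ n → μ {ω | ξ n ω = 1} = ENNReal.ofReal p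
  /-- the `ξ n` are independent of each other -/
  xi_iid : iIndepFun ξ μ
  /-- `ξ n` is independent of `𝔉 (n-1)` and of `ζ n` -/
  xi_indep : ∀ n, 1 ≤ n →
    Indep (MeasurableSpace.comap (ξ n) inferInstance)
      ((F (n - 1)) ⊔ MeasurableSpace.comap (ζ n) inferInstance) μ
  /-- `P(ζ n = 1 ∣ 𝔉 (n-1)) = X (n-1)` -/
  zeta_cond : ∀ n, 1 ≤ n →
    μ[Set.indicator {ω | ζ n ω = 1} (fun _ => (1 : ℝ)) | F (n - 1)]
      =ᵐ[μ] urnX Y B (n - 1)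
  Y_dyn : ∀ n, 1 ≤ n → ∀ ω,
    Y n ω = Y (n - 1) ω
      + a * (if ξ n ω = 1 ∧ ζ n ω = 1 then 1 else 0)
      + b * (if ξ n ω = 1 ∧ ζ n ω = 0 then 1 else 0)
      + g * (if ξ n ω = 0 ∧ ζ n ω = 1 then 1 else 0)
  B_dyn : ∀ n, 1 ≤ n → ∀ ω,
    B n ω = B (n - 1) ω
      + a * (if ξ n ω = 1 ∧ ζ n ω = 0 then 1 else 0)
      + b * (if ξ n ω = 1 ∧ ζ n ω = 1 then 1 else 0)
      + g * (if ξ n ω = 0 ∧ ζ n ω = 0 then 1 else 0)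

namespace MixedUrn

set_option linter.unusedSectionVars false

variable {Ω : Type*} [m0 : MeasurableSpace Ω] {μ : Measure Ω} [IsProbabilityMeasure μ]
  {Y0 B0 a b g : ℕ} {p : ℝ}

/-- total number of balls -/
def S (U : MixedUrn μ Y0 B0 a b g p) (n : ℕ) (ω : Ω) : ℕ := U.Y n ω + U.B n ω

lemma step_cases (U : MixedUrn μ Y0 B0 a b g p) (k : ℕ) (ω : Ω) :
    (U.ξ (k+1) ω = 1 ∧ U.ζ (k+1) ω = 1 ∧ U.Y (k+1) ω = U.Y k ω + a ∧ U.B (k+1) ω = U.B k ω + b)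
  ∨ (U.ξ (k+1) ω = 1 ∧ U.ζ (k+1) ω = 0 ∧ U.Y (k+1) ω = U.Y k ω + b ∧ U.B (k+1) ω = U.B k ω + a)
  ∨ (U.ξ (k+1) ω = 0 ∧ U.ζ (k+1) ω = 1 ∧ U.Y (k+1) ω = U.Y k ω + g ∧ U.B (k+1) ω = U.B k ω)
  ∨ (U.ξ (k+1) ω = 0 ∧ U.ζ (k+1) ω = 0 ∧ U.Y (k+1) ω = U.Y k ω ∧ U.B (k+1) ω = U.B k ω + g) := by
  have hY := U.Y_dyn (k+1) (Nat.le_add_left 1 k) ω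
  have hB := U.B_dyn (k+1) (Nat.le_add_left 1 k) ω
  simp only [Nat.add_sub_cancel] at hY hB
  have hξ := U.xi_binary (k+1) ω
  have hζ := U.zeta_binary (k+1) ω
  interval_cases h1 : U.ξ (k+1) ω <;> interval_cases h2 : U.ζ (k+1) ω <;> simp_all

lemma S_lb (U : MixedUrn μ Y0 B0 a b g p) (hY0 : 0 < Y0) (hB0 : 0 < B0)
    (ha : 0 < a) (hb : 0 < b) (hg : 0 < g) (n : ℕ) (ω : Ω) : n + 2 ≤ U.S n ω := by
  induction n with
  | zero => simp [S, U.Y_init, U.B_init]; omega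
  | succ k ih =>
    rcases U.step_cases k ω with ⟨_,_,h1,h2⟩|⟨_,_,h1,h2⟩|⟨_,_,h1,h2⟩|⟨_,_,h1,h2⟩ <;>
      simp only [S, h1, h2] at * <;> omega

lemma S_ub (U : MixedUrn μ Y0 B0 a b g p) (n : ℕ) (ω : Ω) :
    U.S n ω ≤ (Y0 + B0) + n * (a + b + g) := by
  induction n with
  | zero => simp [S, U.Y_init, U.B_init]
  | succ k ih =>
    have h : U.S (k+1) ω ≤ U.S k ω + (a+b+g) := by
      rcases U.step_cases k ω with ⟨_,_,h1,h2⟩|⟨_,_,h1,h2⟩|⟨_,_,h1,h2⟩|⟨_,_,h1,h2⟩ <;>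
        simp only [S, h1, h2] <;> omega
    have h2 : (k+1) * (a+b+g) = k*(a+b+g) + (a+b+g) := by ring
    omega

lemma Y_le_S (U : MixedUrn μ Y0 B0 a b g p) (n : ℕ) (ω : Ω) : U.Y n ω ≤ U.S n ω :=
  Nat.le_add_right _ _

end MixedUrn
set_option linter.unusedSectionVars false
namespace MixedUrn
section C2
variable {Ω : Type*} [m0 : MeasurableSpace Ω] {μ : Measure Ω} [IsProbabilityMeasure μ]
  {Y0 B0 a b g : ℕ} {p : ℝ} (U : MixedUrn μ Y0 B0 a b g p)

/-- indicator that a yellow ball is drawn at draw `k+1` -/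
noncomputable def Iζ (k : ℕ) : Ω → ℝ := Set.indicator {ω | U.ζ (k+1) ω = 1} fun _ => 1
/-- indicator that Friedman's scheme is used at draw `k+1` -/
noncomputable def Iξ (k : ℕ) : Ω → ℝ := Set.indicator {ω | U.ξ (k+1) ω = 1} fun _ => 1

lemma integrable_bdd {f : Ω → ℝ} (hf : AEStronglyMeasurable f μ) {C : ℝ}
    (h : ∀ ω, |f ω| ≤ C) : Integrable f μ :=
  ⟨hf, HasFiniteIntegral.of_bounded (C := C)
    (Filter.Eventually.of_forall (by simpa [Real.norm_eq_abs] using h))⟩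

lemma measY (n : ℕ) : Measurable[U.F n] fun ω => (U.Y n ω : ℝ) :=
  measurable_from_top.comp (U.Y_adapted n)

lemma measB (n : ℕ) : Measurable[U.F n] fun ω => (U.B n ω : ℝ) :=
  measurable_from_top.comp (U.B_adapted n)

lemma measS (n : ℕ) : Measurable[U.F n] fun ω => (U.S n ω : ℝ) :=
  measurable_from_top.comp ((U.Y_adapted n).add (U.B_adapted n))

lemma measX (n : ℕ) : Measurable[U.F n] (urnX U.Y U.B n) :=
  (U.measY n).div ((U.measY n).add (U.measB n))

lemma smX (n : ℕ) : StronglyMeasurable[U.F n] (urnX U.Y U.B n) :=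
  (U.measX n).stronglyMeasurable

lemma measX0 (n : ℕ) : Measurable (urnX U.Y U.B n) :=
  (U.measX n).mono (U.F.le n) le_rfl

lemma meas_zeta_set (k : ℕ) : MeasurableSet {ω | U.ζ (k+1) ω = 1} :=
  ((U.zeta_adapted (k+1) (Nat.le_add_left 1 k)).mono (U.F.le (k+1)) le_rfl)
    (measurableSet_singleton 1)

lemma measIζ (k : ℕ) : Measurable (U.Iζ k) :=
  measurable_const.indicator (U.meas_zeta_set k)

lemma measIξ (k : ℕ) : Measurable (U.Iξ k) :=
  measurable_const.indicator ((U.xi_meas (k+1)) (measurableSet_singleton 1))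

lemma Iζ_bdd (k : ℕ) (ω : Ω) : |U.Iζ k ω| ≤ 1 := by
  unfold Iζ; rw [Set.indicator_apply]; split <;> simp

lemma Iξ_bdd (k : ℕ) (ω : Ω) : |U.Iξ k ω| ≤ 1 := by
  unfold Iξ; rw [Set.indicator_apply]; split <;> simp

lemma condexp_Iζ (k : ℕ) : μ[U.Iζ k | U.F k] =ᵐ[μ] urnX U.Y U.B k := by
  simpa [Iζ, Nat.add_sub_cancel] using U.zeta_cond (k+1) (Nat.le_add_left 1 k)

/-- pull-out for an `F k`-measurable bounded factor against the draw indicator -/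
lemma condexp_mul_Iζ (k : ℕ) {G : Ω → ℝ} {C : ℝ}
    (hmeas : StronglyMeasurable[U.F k] G) (hbd : ∀ ω, |G ω| ≤ C) :
    μ[fun ω => G ω * U.Iζ k ω | U.F k] =ᵐ[μ] fun ω => G ω * urnX U.Y U.B k ω := by
  have hG0 : AEStronglyMeasurable G μ :=
    (hmeas.mono (U.F.le k)).aestronglyMeasurable
  have hprod : Integrable (G * U.Iζ k) μ := by
    refine integrable_bdd (hG0.mul (U.measIζ k).aestronglyMeasurable) (C := C) fun ω => ?_
    calc |G ω * U.Iζ k ω| = |G ω| * |U.Iζ k ω| := abs_mul _ _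
      _ ≤ C * 1 := mul_le_mul (hbd ω) (U.Iζ_bdd k ω) (abs_nonneg _)
          ((abs_nonneg (G ω)).trans (hbd ω))
      _ = C := mul_one C
  have hIζ : Integrable (U.Iζ k) μ :=
    integrable_bdd (U.measIζ k).aestronglyMeasurable (U.Iζ_bdd k)
  have h1 : μ[G * U.Iζ k | U.F k] =ᵐ[μ] G * μ[U.Iζ k | U.F k] :=
    condExp_mul_of_stronglyMeasurable_left hmeas hprod hIζ
  have h2 : G * μ[U.Iζ k | U.F k] =ᵐ[μ] fun ω => G ω * urnX U.Y U.B k ω := by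
    filter_upwards [U.condexp_Iζ k] with ω hω
    simp [hω]
  exact h1.trans h2

lemma comap_zeta_le (k : ℕ) :
    MeasurableSpace.comap (U.ζ (k+1)) inferInstance ≤ m0 :=
  ((U.zeta_adapted (k+1) (Nat.le_add_left 1 k)).mono (U.F.le (k+1)) le_rfl).comap_le

lemma int_Iξ (k : ℕ) (hp : 0 ≤ p) : ∫ ω, U.Iξ k ω ∂μ = p := by
  unfold Iξ
  have hs : MeasurableSet {ω | U.ξ (k+1) ω = 1} :=
    (U.xi_meas (k+1)) (measurableSet_singleton 1)
  rw [integral_indicator_const (1 : ℝ) hs, measureReal_def, U.xi_bernoulli (k+1) (Nat.le_add_left 1 k)]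
  simp [ENNReal.toReal_ofReal hp]

/-- the σ-algebra generated by `F k` and the draw at time `k+1` -/
def mBig (k : ℕ) : MeasurableSpace Ω :=
  U.F k ⊔ MeasurableSpace.comap (U.ζ (k+1)) inferInstance

/-- the key independence computation for the Friedman/Pólya coin -/
lemma condexp_mul_Iξ (k : ℕ) {h : Ω → ℝ} {C : ℝ}
    (hmeas : StronglyMeasurable[U.mBig k] h)
    (hbd : ∀ ω, |h ω| ≤ C) (hp : 0 ≤ p) :
    μ[fun ω => h ω * U.Iξ k ω | U.F k] =ᵐ[μ] fun ω => p * ((μ[h|U.F k]) ω) := by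
  have hm'le : U.mBig k ≤ m0 := sup_le (U.F.le k) (U.comap_zeta_le k)
  have hbd' : ∀ ω, |h ω| ≤ |C| := fun ω => (hbd ω).trans (le_abs_self C)
  have hxile : MeasurableSpace.comap (U.ξ (k+1)) inferInstance ≤ m0 :=
    (U.xi_meas (k+1)).comap_le
  have hsmIξ : StronglyMeasurable[MeasurableSpace.comap (U.ξ (k+1)) inferInstance] (U.Iξ k) := by
    refine stronglyMeasurable_const.indicator ?_
    exact ⟨{1}, trivial, rfl⟩
  have hindep : Indep (MeasurableSpace.comap (U.ξ (k+1)) inferInstance) (U.mBig k) μ := by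
    have := U.xi_indep (k+1) (Nat.le_add_left 1 k)
    simpa [Nat.add_sub_cancel, mBig] using this
  have hsm_h : AEStronglyMeasurable h μ := (hmeas.mono hm'le).aestronglyMeasurable
  have hint_h : Integrable h μ := integrable_bdd hsm_h hbd'
  have hprod : Integrable (h * U.Iξ k) μ := by
    refine integrable_bdd (hsm_h.mul (U.measIξ k).aestronglyMeasurable) (C := |C|) fun ω => ?_
    calc |h ω * U.Iξ k ω| = |h ω| * |U.Iξ k ω| := abs_mul _ _
      _ ≤ |C| * 1 := mul_le_mul (hbd' ω) (U.Iξ_bdd k ω) (abs_nonneg _) (abs_nonneg C)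
      _ = |C| := mul_one _
  have hIξint : Integrable (U.Iξ k) μ :=
    integrable_bdd (U.measIξ k).aestronglyMeasurable (U.Iξ_bdd k)
  -- step A : pull out h at level m'
  have hA : μ[h * U.Iξ k|U.mBig k] =ᵐ[μ] h * μ[U.Iξ k|U.mBig k] :=
    condExp_mul_of_stronglyMeasurable_left hmeas hprod hIξint
  -- step B : independence
  have hB : μ[U.Iξ k|U.mBig k] =ᵐ[μ] fun _ => ∫ ω, U.Iξ k ω ∂μ :=
    condExp_indep_eq hxile hm'le hsmIξ hindep
  have hC : μ[h * U.Iξ k|U.mBig k] =ᵐ[μ] fun ω => p * h ω := by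
    filter_upwards [hA, hB] with ω h1 h2
    rw [h1, Pi.mul_apply, h2, U.int_Iξ k hp, mul_comm]
  -- step D : tower
  have hD : μ[fun ω => h ω * U.Iξ k ω|U.F k] =ᵐ[μ] μ[μ[h * U.Iξ k|U.mBig k]|U.F k] :=
    by haveI : SigmaFinite (μ.trim hm'le) := @IsFiniteMeasure.toSigmaFinite _ _ _ (isFiniteMeasure_trim hm'le); exact (@condExp_condExp_of_le Ω ℝ (h * U.Iξ k) _ _ _ (U.F k) (U.mBig k) m0 μ (le_sup_left : (U.F k : MeasurableSpace Ω) ≤ U.mBig k) hm'le this).symm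
  have hE : μ[μ[h * U.Iξ k|U.mBig k]|U.F k] =ᵐ[μ] μ[fun ω => p * h ω|U.F k] :=
    condExp_congr_ae hC
  have hF : μ[fun ω => p * h ω|U.F k] =ᵐ[μ] fun ω => p * ((μ[h|U.F k]) ω) := by
    have := condExp_smul (μ := μ) (m := U.F k) p h
    simpa [smul_eq_mul, Pi.smul_def] using this
  exact (hD.trans (hE.trans hF))

end C2
end MixedUrn
namespace MixedUrn
section C3
set_option linter.unusedSectionVars false
variable {Ω : Type*} [m0 : MeasurableSpace Ω] {μ : Measure Ω} [IsProbabilityMeasure μ]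
  {Y0 B0 a b g : ℕ} {p : ℝ} (U : MixedUrn μ Y0 B0 a b g p)

/-- generic post-draw proportion -/
noncomputable def fYS (k u v : ℕ) : Ω → ℝ :=
  fun ω => ((U.Y k ω : ℝ) + u) / ((U.S k ω : ℝ) + v)

lemma measfYS (k u v : ℕ) : Measurable[U.F k] (U.fYS k u v) :=
  ((U.measY k).add measurable_const).div ((U.measS k).add measurable_const)

lemma S_pos (hY0 : 0 < Y0) (hB0 : 0 < B0) (ha : 0 < a) (hb : 0 < b) (hg : 0 < g)
    (k : ℕ) (ω : Ω) : (0:ℝ) < (U.S k ω : ℝ) := by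
  have := U.S_lb hY0 hB0 ha hb hg k ω
  have : (2:ℝ) ≤ (U.S k ω : ℝ) := by exact_mod_cast le_trans (by omega) this
  linarith

lemma fYS_bdd (hY0 : 0 < Y0) (hB0 : 0 < B0) (ha : 0 < a) (hb : 0 < b) (hg : 0 < g)
    (k u v : ℕ) (huv : u ≤ v) (ω : Ω) : |U.fYS k u v ω| ≤ 1 := by
  have hS := U.S_pos hY0 hB0 ha hb hg k ω
  have hYS : (U.Y k ω : ℝ) ≤ (U.S k ω : ℝ) := by exact_mod_cast U.Y_le_S k ω
  have hden : (0:ℝ) < (U.S k ω : ℝ) + v := by positivity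
  have hnum : (0:ℝ) ≤ (U.Y k ω : ℝ) + u := by positivity
  unfold fYS
  rw [abs_of_nonneg (div_nonneg hnum hden.le), div_le_one hden]
  have : (u:ℝ) ≤ v := by exact_mod_cast huv
  linarith

/-- the Pólya part of the one-step evolution -/
noncomputable def hP (k : ℕ) : Ω → ℝ := fun ω =>
  U.fYS k 0 g ω + (U.fYS k g g ω - U.fYS k 0 g ω) * U.Iζ k ω

/-- the Friedman-minus-Pólya part of the one-step evolution -/
noncomputable def hQ (k : ℕ) : Ω → ℝ := fun ω =>
  (U.fYS k b (a+b) ω - U.fYS k 0 g ω)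
    + (U.fYS k a (a+b) ω - U.fYS k b (a+b) ω - U.fYS k g g ω + U.fYS k 0 g ω) * U.Iζ k ω

lemma X_decomp (k : ℕ) (ω : Ω) :
    urnX U.Y U.B (k+1) ω = U.hP k ω + U.hQ k ω * U.Iξ k ω := by
  have hSw : (U.S k ω : ℝ) = (U.Y k ω : ℝ) + (U.B k ω : ℝ) := by
    unfold S; push_cast; ring
  rcases U.step_cases k ω with ⟨h1,h2,h3,h4⟩|⟨h1,h2,h3,h4⟩|⟨h1,h2,h3,h4⟩|⟨h1,h2,h3,h4⟩ <;>
    simp only [urnX, hP, hQ, fYS, Iζ, Iξ, Set.indicator_apply, Set.mem_setOf_eq, h1, h2, h3, h4,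
      if_true, if_false, hSw] <;>
    norm_num <;> push_cast <;> ring_nf
end C3
end MixedUrn
namespace MixedUrn
section C4
set_option linter.unusedSectionVars false
variable {Ω : Type*} [m0 : MeasurableSpace Ω] {μ : Measure Ω} [IsProbabilityMeasure μ]
  {Y0 B0 a b g : ℕ} {p : ℝ} (U : MixedUrn μ Y0 B0 a b g p)

lemma intFk {k : ℕ} {f : Ω → ℝ} (hm : Measurable[U.F k] f) {C : ℝ}
    (hb : ∀ ω, |f ω| ≤ C) : Integrable f μ :=
  integrable_bdd (Measurable.aestronglyMeasurable (hm.mono (U.F.le k) le_rfl)) hb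

lemma measIζ_big (k : ℕ) : Measurable[U.mBig k] (U.Iζ k) := by
  have h : MeasurableSet[MeasurableSpace.comap (U.ζ (k+1)) inferInstance]
      {ω | U.ζ (k+1) ω = 1} := ⟨{1}, trivial, rfl⟩
  have h2 : MeasurableSpace.comap (U.ζ (k+1)) inferInstance ≤ U.mBig k := le_sup_right
  exact measurable_const.indicator (h2 _ h)

lemma condexp_hP (hY0 : 0 < Y0) (hB0 : 0 < B0) (ha : 0 < a) (hb : 0 < b) (hg : 0 < g) (k : ℕ) :
    μ[U.hP k|U.F k] =ᵐ[μ] fun ω =>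
      U.fYS k 0 g ω + (U.fYS k g g ω - U.fYS k 0 g ω) * urnX U.Y U.B k ω := by
  have hf00 := U.fYS_bdd hY0 hB0 ha hb hg k 0 g (Nat.zero_le g)
  have hf01 := U.fYS_bdd hY0 hB0 ha hb hg k g g le_rfl
  have hmG : Measurable[U.F k] (fun ω => U.fYS k g g ω - U.fYS k 0 g ω) :=
    (U.measfYS k g g).sub (U.measfYS k 0 g)
  have hG_bdd : ∀ ω, |U.fYS k g g ω - U.fYS k 0 g ω| ≤ 2 := fun ω =>
    (abs_sub _ _).trans (by linarith [hf01 ω, hf00 ω])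
  have hint1 : Integrable (U.fYS k 0 g) μ := U.intFk (U.measfYS k 0 g) hf00
  have hint2 : Integrable (fun ω => (U.fYS k g g ω - U.fYS k 0 g ω) * U.Iζ k ω) μ := by
    refine integrable_bdd (Measurable.aestronglyMeasurable
      ((hmG.mono (U.F.le k) le_rfl).mul (U.measIζ k))) (C := 2) fun ω => ?_
    calc |(U.fYS k g g ω - U.fYS k 0 g ω) * U.Iζ k ω|
        = |U.fYS k g g ω - U.fYS k 0 g ω| * |U.Iζ k ω| := abs_mul _ _
      _ ≤ 2 * 1 := mul_le_mul (hG_bdd ω) (U.Iζ_bdd k ω) (abs_nonneg _) (by norm_num)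
      _ = 2 := by norm_num
  have heq : U.hP k = U.fYS k 0 g + fun ω => (U.fYS k g g ω - U.fYS k 0 g ω) * U.Iζ k ω := rfl
  have hadd := condExp_add (μ := μ) (m := (U.F k : MeasurableSpace Ω)) hint1 hint2
  rw [← heq] at hadd
  refine hadd.trans ?_
  have h1 : μ[U.fYS k 0 g|U.F k] = U.fYS k 0 g :=
    condExp_of_stronglyMeasurable (U.F.le k) (U.measfYS k 0 g).stronglyMeasurable hint1
  have h2 := U.condexp_mul_Iζ k (G := fun ω => U.fYS k g g ω - U.fYS k 0 g ω) (C := 2)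
    hmG.stronglyMeasurable hG_bdd
  filter_upwards [h2] with ω e2
  simp only [Pi.add_apply, h1, e2]

lemma condexp_hQ (hY0 : 0 < Y0) (hB0 : 0 < B0) (ha : 0 < a) (hb : 0 < b) (hg : 0 < g) (k : ℕ) :
    μ[U.hQ k|U.F k] =ᵐ[μ] fun ω =>
      (U.fYS k b (a+b) ω - U.fYS k 0 g ω)
        + (U.fYS k a (a+b) ω - U.fYS k b (a+b) ω - U.fYS k g g ω + U.fYS k 0 g ω)
          * urnX U.Y U.B k ω := by
  have hf00 := U.fYS_bdd hY0 hB0 ha hb hg k 0 g (Nat.zero_le g)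
  have hf01 := U.fYS_bdd hY0 hB0 ha hb hg k g g le_rfl
  have hf10 := U.fYS_bdd hY0 hB0 ha hb hg k b (a+b) (Nat.le_add_left b a)
  have hf11 := U.fYS_bdd hY0 hB0 ha hb hg k a (a+b) (Nat.le_add_right a b)
  have hmG0 : Measurable[U.F k] (fun ω => U.fYS k b (a+b) ω - U.fYS k 0 g ω) :=
    (U.measfYS k b (a+b)).sub (U.measfYS k 0 g)
  have hmG : Measurable[U.F k]
      (fun ω => U.fYS k a (a+b) ω - U.fYS k b (a+b) ω - U.fYS k g g ω + U.fYS k 0 g ω) :=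
    (((U.measfYS k a (a+b)).sub (U.measfYS k b (a+b))).sub (U.measfYS k g g)).add
      (U.measfYS k 0 g)
  have hG0_bdd : ∀ ω, |U.fYS k b (a+b) ω - U.fYS k 0 g ω| ≤ 2 := fun ω =>
    (abs_sub _ _).trans (by linarith [hf10 ω, hf00 ω])
  have hG_bdd : ∀ ω,
      |U.fYS k a (a+b) ω - U.fYS k b (a+b) ω - U.fYS k g g ω + U.fYS k 0 g ω| ≤ 4 := fun ω => by
    have h1 := abs_add_le (U.fYS k a (a+b) ω - U.fYS k b (a+b) ω - U.fYS k g g ω) (U.fYS k 0 g ω)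
    have h2 := abs_sub (U.fYS k a (a+b) ω - U.fYS k b (a+b) ω) (U.fYS k g g ω)
    have h3 := abs_sub (U.fYS k a (a+b) ω) (U.fYS k b (a+b) ω)
    linarith [hf00 ω, hf01 ω, hf10 ω, hf11 ω]
  have hint1 : Integrable (fun ω => U.fYS k b (a+b) ω - U.fYS k 0 g ω) μ := U.intFk hmG0 hG0_bdd
  have hint2 : Integrable (fun ω =>
      (U.fYS k a (a+b) ω - U.fYS k b (a+b) ω - U.fYS k g g ω + U.fYS k 0 g ω) * U.Iζ k ω) μ := by
    refine integrable_bdd (Measurable.aestronglyMeasurable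
      ((hmG.mono (U.F.le k) le_rfl).mul (U.measIζ k))) (C := 4) fun ω => ?_
    calc |(U.fYS k a (a+b) ω - U.fYS k b (a+b) ω - U.fYS k g g ω + U.fYS k 0 g ω) * U.Iζ k ω|
        = |U.fYS k a (a+b) ω - U.fYS k b (a+b) ω - U.fYS k g g ω + U.fYS k 0 g ω| * |U.Iζ k ω| :=
          abs_mul _ _
      _ ≤ 4 * 1 := mul_le_mul (hG_bdd ω) (U.Iζ_bdd k ω) (abs_nonneg _) (by norm_num)
      _ = 4 := by norm_num
  have heq : U.hQ k = (fun ω => U.fYS k b (a+b) ω - U.fYS k 0 g ω) + fun ω =>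
      (U.fYS k a (a+b) ω - U.fYS k b (a+b) ω - U.fYS k g g ω + U.fYS k 0 g ω) * U.Iζ k ω := rfl
  have hadd := condExp_add (μ := μ) (m := (U.F k : MeasurableSpace Ω)) hint1 hint2
  rw [← heq] at hadd
  refine hadd.trans ?_
  have h1 : μ[fun ω => U.fYS k b (a+b) ω - U.fYS k 0 g ω|U.F k]
      = fun ω => U.fYS k b (a+b) ω - U.fYS k 0 g ω :=
    condExp_of_stronglyMeasurable (U.F.le k) hmG0.stronglyMeasurable hint1
  have h2 := U.condexp_mul_Iζ k
    (G := fun ω => U.fYS k a (a+b) ω - U.fYS k b (a+b) ω - U.fYS k g g ω + U.fYS k 0 g ω)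
    (C := 4) hmG.stronglyMeasurable hG_bdd
  filter_upwards [h2] with ω e2
  simp only [Pi.add_apply, h1, e2]

end C4
end MixedUrn
namespace MixedUrn
section C5
set_option linter.unusedSectionVars false
variable {Ω : Type*} [m0 : MeasurableSpace Ω] {μ : Measure Ω} [IsProbabilityMeasure μ]
  {Y0 B0 a b g : ℕ} {p : ℝ} (U : MixedUrn μ Y0 B0 a b g p)

private lemma drift_alg (A C pa pb pg P : ℝ) (hS : 0 < A + C)
    (hpa : 0 < pa) (hpb : 0 < pb) (hpg : 0 < pg) :
    A/(A+C+pg) + ((A+pg)/(A+C+pg) - A/(A+C+pg)) * (A/(A+C))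
      + P * ((A+pb)/(A+C+pa+pb) - A/(A+C+pg)
        + ((A+pa)/(A+C+pa+pb) - (A+pb)/(A+C+pa+pb) - (A+pg)/(A+C+pg) + A/(A+C+pg)) * (A/(A+C)))
    = A/(A+C) + P * pb * (1 - 2*(A/(A+C)))/(A+C+pa+pb) := by
  have h1 : A+C+pg ≠ 0 := by positivity
  have h2 : A+C+pa+pb ≠ 0 := by positivity
  have h3 : A+C ≠ 0 := ne_of_gt hS
  field_simp
  ring

lemma hQ_bdd (hY0 : 0 < Y0) (hB0 : 0 < B0) (ha : 0 < a) (hb : 0 < b) (hg : 0 < g)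
    (k : ℕ) (ω : Ω) : |U.hQ k ω| ≤ 6 := by
  have hf00 := U.fYS_bdd hY0 hB0 ha hb hg k 0 g (Nat.zero_le g) ω
  have hf01 := U.fYS_bdd hY0 hB0 ha hb hg k g g le_rfl ω
  have hf10 := U.fYS_bdd hY0 hB0 ha hb hg k b (a+b) (Nat.le_add_left b a) ω
  have hf11 := U.fYS_bdd hY0 hB0 ha hb hg k a (a+b) (Nat.le_add_right a b) ω
  have hIζ := U.Iζ_bdd k ω
  unfold hQ
  have h1 := abs_add_le (U.fYS k b (a+b) ω - U.fYS k 0 g ω)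
    ((U.fYS k a (a+b) ω - U.fYS k b (a+b) ω - U.fYS k g g ω + U.fYS k 0 g ω) * U.Iζ k ω)
  have h2 := abs_mul (U.fYS k a (a+b) ω - U.fYS k b (a+b) ω - U.fYS k g g ω + U.fYS k 0 g ω)
    (U.Iζ k ω)
  have h3 : |U.fYS k a (a+b) ω - U.fYS k b (a+b) ω - U.fYS k g g ω + U.fYS k 0 g ω| ≤ 4 := by
    have e1 := abs_add_le (U.fYS k a (a+b) ω - U.fYS k b (a+b) ω - U.fYS k g g ω) (U.fYS k 0 g ω)
    have e2 := abs_sub (U.fYS k a (a+b) ω - U.fYS k b (a+b) ω) (U.fYS k g g ω)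
    have e3 := abs_sub (U.fYS k a (a+b) ω) (U.fYS k b (a+b) ω)
    linarith
  have h4 : |U.fYS k b (a+b) ω - U.fYS k 0 g ω| ≤ 2 :=
    (abs_sub _ _).trans (by linarith)
  have h5 : |U.fYS k a (a+b) ω - U.fYS k b (a+b) ω - U.fYS k g g ω + U.fYS k 0 g ω|
      * |U.Iζ k ω| ≤ 4 * 1 :=
    mul_le_mul h3 hIζ (abs_nonneg _) (by norm_num)
  linarith

lemma hP_bdd (hY0 : 0 < Y0) (hB0 : 0 < B0) (ha : 0 < a) (hb : 0 < b) (hg : 0 < g)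
    (k : ℕ) (ω : Ω) : |U.hP k ω| ≤ 3 := by
  have hf00 := U.fYS_bdd hY0 hB0 ha hb hg k 0 g (Nat.zero_le g) ω
  have hf01 := U.fYS_bdd hY0 hB0 ha hb hg k g g le_rfl ω
  have hIζ := U.Iζ_bdd k ω
  unfold hP
  have h1 := abs_add_le (U.fYS k 0 g ω) ((U.fYS k g g ω - U.fYS k 0 g ω) * U.Iζ k ω)
  have h2 := abs_mul (U.fYS k g g ω - U.fYS k 0 g ω) (U.Iζ k ω)
  have h3 : |U.fYS k g g ω - U.fYS k 0 g ω| ≤ 2 := (abs_sub _ _).trans (by linarith)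
  have h4 : |U.fYS k g g ω - U.fYS k 0 g ω| * |U.Iζ k ω| ≤ 2 * 1 :=
    mul_le_mul h3 hIζ (abs_nonneg _) (by norm_num)
  linarith

lemma meashP (k : ℕ) : Measurable (U.hP k) :=
  ((((U.measfYS k 0 g).mono (U.F.le k) le_rfl)).add
    ((((U.measfYS k g g).sub (U.measfYS k 0 g)).mono (U.F.le k) le_rfl).mul (U.measIζ k)))

lemma smhQ_big (k : ℕ) : StronglyMeasurable[U.mBig k] (U.hQ k) := by
  have h1 : Measurable[U.mBig k] (fun ω => U.fYS k b (a+b) ω - U.fYS k 0 g ω) :=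
    (((U.measfYS k b (a+b)).sub (U.measfYS k 0 g)).mono le_sup_left le_rfl)
  have h2 : Measurable[U.mBig k]
      (fun ω => U.fYS k a (a+b) ω - U.fYS k b (a+b) ω - U.fYS k g g ω + U.fYS k 0 g ω) :=
    (((((U.measfYS k a (a+b)).sub (U.measfYS k b (a+b))).sub (U.measfYS k g g)).add
      (U.measfYS k 0 g)).mono le_sup_left le_rfl)
  exact (h1.add (h2.mul (U.measIζ_big k))).stronglyMeasurable

lemma condexp_X_succ (hY0 : 0 < Y0) (hB0 : 0 < B0) (ha : 0 < a) (hb : 0 < b) (hg : 0 < g)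
    (hp0 : 0 ≤ p) (k : ℕ) :
    μ[urnX U.Y U.B (k+1)|U.F k] =ᵐ[μ] fun ω =>
      urnX U.Y U.B k ω + p * b * (1 - 2 * urnX U.Y U.B k ω) / ((U.S k ω : ℝ) + a + b) := by
  have heq : urnX U.Y U.B (k+1) = U.hP k + fun ω => U.hQ k ω * U.Iξ k ω :=
    funext (U.X_decomp k)
  have hintP : Integrable (U.hP k) μ :=
    integrable_bdd (U.meashP k).aestronglyMeasurable (U.hP_bdd hY0 hB0 ha hb hg k)
  have hintQξ : Integrable (fun ω => U.hQ k ω * U.Iξ k ω) μ := by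
    refine integrable_bdd (Measurable.aestronglyMeasurable
      (((U.smhQ_big k).measurable.mono (sup_le (U.F.le k) (U.comap_zeta_le k)) le_rfl).mul
        (U.measIξ k))) (C := 6) fun ω => ?_
    calc |U.hQ k ω * U.Iξ k ω| = |U.hQ k ω| * |U.Iξ k ω| := abs_mul _ _
      _ ≤ 6 * 1 := mul_le_mul (U.hQ_bdd hY0 hB0 ha hb hg k ω) (U.Iξ_bdd k ω)
          (abs_nonneg _) (by norm_num)
      _ = 6 := by norm_num
  have hadd := condExp_add (μ := μ) (m := (U.F k : MeasurableSpace Ω)) hintP hintQξ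
  rw [← heq] at hadd
  have h1 := U.condexp_hP hY0 hB0 ha hb hg k
  have h2 := U.condexp_mul_Iξ k (U.smhQ_big k) (U.hQ_bdd hY0 hB0 ha hb hg k) hp0
  have h3 := U.condexp_hQ hY0 hB0 ha hb hg k
  refine hadd.trans ?_
  have h2' : μ[fun ω => U.hQ k ω * U.Iξ k ω|U.F k] =ᵐ[μ] fun ω => p *
      (((U.fYS k b (a+b) ω - U.fYS k 0 g ω)
        + (U.fYS k a (a+b) ω - U.fYS k b (a+b) ω - U.fYS k g g ω + U.fYS k 0 g ω)
          * urnX U.Y U.B k ω)) := by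
    refine h2.trans ?_
    filter_upwards [h3] with ω e3
    rw [e3]
  filter_upwards [h1, h2'] with ω e1 e2
  rw [Pi.add_apply, e1, e2]
  -- now pure algebra
  have hS := U.S_pos hY0 hB0 ha hb hg k ω
  have hcast : ((U.S k ω : ℝ)) = (U.Y k ω : ℝ) + (U.B k ω : ℝ) := by unfold S; push_cast; ring
  rw [hcast] at hS
  have key := drift_alg ((U.Y k ω : ℝ)) ((U.B k ω : ℝ)) a b g p hS
    (by exact_mod_cast ha) (by exact_mod_cast hb) (by exact_mod_cast hg)
  simp only [fYS, urnX, hcast]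
  push_cast
  push_cast at key
  linear_combination key
end C5
end MixedUrn
namespace MixedUrn
section C6
set_option linter.unusedSectionVars false
variable {Ω : Type*} [m0 : MeasurableSpace Ω] {μ : Measure Ω} [IsProbabilityMeasure μ]
  {Y0 B0 a b g : ℕ} {p : ℝ} (U : MixedUrn μ Y0 B0 a b g p)

/-- squared distance of the proportion from 1/2 -/
noncomputable def V (n : ℕ) : Ω → ℝ := fun ω => (urnX U.Y U.B n ω - 1/2)^2

/-- the conditional drift of `V` -/
noncomputable def sfn (k : ℕ) : Ω → ℝ := fun ω =>
  4*p*(b:ℝ)*(U.V k ω)/((U.S k ω : ℝ)+a+b)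

lemma X01 (hY0 : 0 < Y0) (hB0 : 0 < B0) (ha : 0 < a) (hb : 0 < b) (hg : 0 < g)
    (n : ℕ) (ω : Ω) : 0 ≤ urnX U.Y U.B n ω ∧ urnX U.Y U.B n ω ≤ 1 := by
  have hS := U.S_pos hY0 hB0 ha hb hg n ω
  have hcast : ((U.S n ω : ℝ)) = (U.Y n ω : ℝ) + (U.B n ω : ℝ) := by unfold S; push_cast; ring
  rw [hcast] at hS
  constructor
  · exact div_nonneg (Nat.cast_nonneg _) hS.le
  · rw [urnX, div_le_one hS]
    have : (0:ℝ) ≤ (U.B n ω : ℝ) := Nat.cast_nonneg _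
    linarith

lemma V_bdd (hY0 : 0 < Y0) (hB0 : 0 < B0) (ha : 0 < a) (hb : 0 < b) (hg : 0 < g)
    (n : ℕ) (ω : Ω) : |U.V n ω| ≤ 1 := by
  obtain ⟨h0, h1⟩ := U.X01 hY0 hB0 ha hb hg n ω
  rw [V, abs_of_nonneg (sq_nonneg _), sq]
  nlinarith

lemma measV (n : ℕ) : Measurable[U.F n] (U.V n) :=
  (((U.measX n).sub measurable_const).pow measurable_const)

private lemma diff_alg {A C u v N D : ℝ} (hN : N = A + u) (hD : D = A + C + v)
    (h2 : 0 < A + C) (hA : 0 ≤ A) (hC : 0 ≤ C) (hu : 0 ≤ u) (huv : u ≤ v) :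
    |N/D - A/(A+C)| ≤ v/(A+C) := by
  have hv : 0 ≤ v := hu.trans huv
  have hDpos : 0 < D := by rw [hD]; linarith
  have key : N/D - A/(A+C) = (u*(A+C) - A*v)/(D*(A+C)) := by
    field_simp [hN, hD]
    rw [hN, hD]; ring
  rw [key, abs_div, abs_of_pos (mul_pos hDpos h2)]
  rw [div_le_div_iff₀ (mul_pos hDpos h2) h2]
  have habs : |u*(A+C) - A*v| ≤ v*(A+C) := by
    rw [abs_le]
    constructor <;> nlinarith
  calc |u*(A+C) - A*v| * (A+C) ≤ (v*(A+C)) * (A+C) :=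
        mul_le_mul_of_nonneg_right habs h2.le
    _ ≤ v * (D*(A+C)) := by rw [hD]; nlinarith [mul_nonneg (mul_nonneg hv hv) h2.le]

lemma Xdiff_bdd (hY0 : 0 < Y0) (hB0 : 0 < B0) (ha : 0 < a) (hb : 0 < b) (hg : 0 < g)
    (k : ℕ) (ω : Ω) :
    |urnX U.Y U.B (k+1) ω - urnX U.Y U.B k ω| ≤ ((a:ℝ)+b+g)/((k:ℝ)+2) := by
  have hSlb : ((k:ℝ)+2) ≤ (U.S k ω : ℝ) := by
    have := U.S_lb hY0 hB0 ha hb hg k ω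
    exact_mod_cast (by exact_mod_cast this : ((k+2 : ℕ):ℝ) ≤ (U.S k ω : ℝ))
  have hcast : ((U.S k ω : ℝ)) = (U.Y k ω : ℝ) + (U.B k ω : ℝ) := by unfold S; push_cast; ring
  have hS : (0:ℝ) < (U.Y k ω : ℝ) + (U.B k ω : ℝ) := by rw [← hcast]; linarith
  have hA : (0:ℝ) ≤ (U.Y k ω : ℝ) := Nat.cast_nonneg _
  have hC : (0:ℝ) ≤ (U.B k ω : ℝ) := Nat.cast_nonneg _
  have hk2 : (0:ℝ) < (k:ℝ)+2 := by positivity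
  have hSlb' : ((k:ℝ)+2) ≤ (U.Y k ω : ℝ) + (U.B k ω : ℝ) := by rw [← hcast]; exact hSlb
  have htail : ∀ v : ℝ, 0 ≤ v → v ≤ (a:ℝ)+b+g →
      v/((U.Y k ω : ℝ) + (U.B k ω : ℝ)) ≤ ((a:ℝ)+b+g)/((k:ℝ)+2) := by
    intro v hv hvle
    gcongr
  have hane : (0:ℝ) ≤ (a:ℝ) := Nat.cast_nonneg _
  have hbne : (0:ℝ) ≤ (b:ℝ) := Nat.cast_nonneg _
  have hgne : (0:ℝ) ≤ (g:ℝ) := Nat.cast_nonneg _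
  rcases U.step_cases k ω with ⟨h1,h2,h3,h4⟩|⟨h1,h2,h3,h4⟩|⟨h1,h2,h3,h4⟩|⟨h1,h2,h3,h4⟩ <;>
    simp only [urnX, h3, h4] <;> push_cast
  · exact le_trans (diff_alg (u := (a:ℝ)) (v := (a:ℝ)+(b:ℝ)) rfl (by ring) hS hA hC hane
      (by linarith)) (htail _ (by linarith) (by linarith))
  · exact le_trans (diff_alg (u := (b:ℝ)) (v := (a:ℝ)+(b:ℝ)) rfl (by ring) hS hA hC hbne
      (by linarith)) (htail _ (by linarith) (by linarith))
  · exact le_trans (diff_alg (u := (g:ℝ)) (v := (g:ℝ)) rfl (by ring) hS hA hC hgne le_rfl)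
      (htail _ (by linarith) (by linarith))
  · exact le_trans (diff_alg (u := (0:ℝ)) (v := (g:ℝ)) (by ring) (by ring) hS hA hC le_rfl
      (by linarith)) (htail _ (by linarith) (by linarith))
end C6
end MixedUrn
namespace MixedUrn
section C7
set_option linter.unusedSectionVars false
variable {Ω : Type*} [m0 : MeasurableSpace Ω] {μ : Measure Ω} [IsProbabilityMeasure μ]
  {Y0 B0 a b g : ℕ} {p : ℝ} (U : MixedUrn μ Y0 B0 a b g p)

lemma condexp_V_succ (hY0 : 0 < Y0) (hB0 : 0 < B0) (ha : 0 < a) (hb : 0 < b) (hg : 0 < g)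
    (hp0 : 0 ≤ p) (k : ℕ) :
    μ[U.V (k+1)|U.F k] ≤ᵐ[μ] fun ω =>
      U.V k ω - U.sfn k ω + ((a:ℝ)+b+g)^2/(((k:ℝ)+2)^2) := by
  set X := urnX U.Y U.B with hX
  have hX01 := U.X01 hY0 hB0 ha hb hg
  have hXd := U.Xdiff_bdd hY0 hB0 ha hb hg k
  set G : Ω → ℝ := fun ω => 2*(X k ω - 1/2) with hG
  set DX : Ω → ℝ := fun ω => X (k+1) ω - X k ω with hDX
  have hGbdd : ∀ ω, |G ω| ≤ 3 := fun ω => by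
    obtain ⟨u1, u2⟩ := hX01 k ω
    rw [hG, abs_le]; constructor <;> simp <;> linarith
  have hDXbdd : ∀ ω, |DX ω| ≤ 2 := fun ω => by
    obtain ⟨u1, u2⟩ := hX01 k ω
    obtain ⟨v1, v2⟩ := hX01 (k+1) ω
    rw [hDX, abs_le]; constructor <;> simp <;> linarith
  have hmG : Measurable[U.F k] G := ((U.measX k).sub measurable_const).const_mul 2
  have hmDX : Measurable DX := (U.measX0 (k+1)).sub (U.measX0 k)
  have hmf2 : Measurable (fun ω => DX ω^2) := hmDX.pow measurable_const
  have hintVk : Integrable (U.V k) μ := U.intFk (U.measV k) (U.V_bdd hY0 hB0 ha hb hg k)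
  have hintf1 : Integrable (fun ω => G ω * DX ω) μ := by
    refine integrable_bdd (((hmG.mono (U.F.le k) le_rfl).mul hmDX).aestronglyMeasurable)
      (C := 6) fun ω => ?_
    calc |G ω * DX ω| = |G ω| * |DX ω| := abs_mul _ _
      _ ≤ 3 * 2 := mul_le_mul (hGbdd ω) (hDXbdd ω) (abs_nonneg _) (by norm_num)
      _ = 6 := by norm_num
  have hintf2 : Integrable (fun ω => DX ω^2) μ := by
    refine integrable_bdd hmf2.aestronglyMeasurable (C := 4) fun ω => ?_
    rw [abs_of_nonneg (sq_nonneg _), sq]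
    calc DX ω * DX ω ≤ |DX ω| * |DX ω| := by
          rw [← abs_mul]; exact le_abs_self _
      _ ≤ 2 * 2 := mul_le_mul (hDXbdd ω) (hDXbdd ω) (abs_nonneg _) (by norm_num)
      _ = 4 := by norm_num
  have hintDX : Integrable DX μ := integrable_bdd hmDX.aestronglyMeasurable hDXbdd
  have hintXk : Integrable (X k) μ := U.intFk (U.measX k) (C := 1) (fun ω => by
    obtain ⟨u1, u2⟩ := hX01 k ω; rw [abs_le]; constructor <;> linarith)
  have hintX1 : Integrable (X (k+1)) μ := U.intFk (k := k+1) (U.measX (k+1))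
    (C := 1) (fun ω => by obtain ⟨u1, u2⟩ := hX01 (k+1) ω; rw [abs_le]; constructor <;> linarith)
  -- decomposition
  have hdec : U.V (k+1) = (U.V k + fun ω => G ω * DX ω) + fun ω => DX ω^2 := by
    funext ω
    simp only [V, Pi.add_apply, hG, hDX, hX]
    ring
  have hadd1 := condExp_add (μ := μ) (m := (U.F k : MeasurableSpace Ω))
    (hintVk.add hintf1) hintf2
  have hadd2 := condExp_add (μ := μ) (m := (U.F k : MeasurableSpace Ω)) hintVk hintf1
  rw [← hdec] at hadd1
  -- conditional expectation of DX
  have hDXsub := condExp_sub (μ := μ) (m := (U.F k : MeasurableSpace Ω)) hintX1 hintXk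
  have hXk_eq : μ[X k|U.F k] = X k :=
    condExp_of_stronglyMeasurable (U.F.le k) (U.smX k) hintXk
  have hdrift := U.condexp_X_succ hY0 hB0 ha hb hg hp0 k
  have hDXdrift : μ[DX|U.F k] =ᵐ[μ] fun ω => p*(b:ℝ)*(1 - 2*X k ω)/((U.S k ω : ℝ)+a+b) := by
    refine hDXsub.trans ?_
    filter_upwards [hdrift] with ω e1
    simp only [Pi.sub_apply, hXk_eq]; rw [hX, e1]
    ring
  -- pull out G
  have hf1 : μ[fun ω => G ω * DX ω|U.F k] =ᵐ[μ] fun ω => -U.sfn k ω := by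
    have hmul := condExp_mul_of_stronglyMeasurable_left hmG.stronglyMeasurable hintf1 hintDX
    refine hmul.trans ?_
    filter_upwards [hDXdrift] with ω e1
    simp only [Pi.mul_apply, e1]
    simp only [hG, sfn, V, hX]
    ring
  -- bound the quadratic term
  have hf2 : μ[fun ω => DX ω^2|U.F k] ≤ᵐ[μ]
      fun _ => ((a:ℝ)+b+g)^2/(((k:ℝ)+2)^2) := by
    have hle : (fun ω => DX ω^2) ≤ᵐ[μ] fun _ => ((a:ℝ)+b+g)^2/(((k:ℝ)+2)^2) := by
      refine Filter.Eventually.of_forall fun ω => ?_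
      have h1 : |DX ω| ≤ ((a:ℝ)+b+g)/((k:ℝ)+2) := hXd ω
      have h2 : DX ω^2 = |DX ω|^2 := (sq_abs _).symm
      show DX ω^2 ≤ ((a:ℝ)+b+g)^2/(((k:ℝ)+2)^2)
      rw [h2, ← div_pow]
      exact pow_le_pow_left₀ (abs_nonneg _) h1 2
    have := condExp_mono (μ := μ) (m := (U.F k : MeasurableSpace Ω)) hintf2
      (integrable_const _) hle
    refine this.trans ?_
    rw [condExp_const (U.F.le k)]
  -- put everything together
  have hVk_eq : μ[U.V k|U.F k] = U.V k :=
    condExp_of_stronglyMeasurable (U.F.le k) (U.measV k).stronglyMeasurable hintVk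
  filter_upwards [hadd1, hadd2, hf1, hf2] with ω e1 e2 e3 e4
  rw [e1, Pi.add_apply, e2, Pi.add_apply, hVk_eq, e3]
  linarith [e4]
end C7
end MixedUrn
namespace MixedUrn
section C8
set_option linter.unusedSectionVars false
variable {Ω : Type*} [m0 : MeasurableSpace Ω] {μ : Measure Ω} [IsProbabilityMeasure μ]
  {Y0 B0 a b g : ℕ} {p : ℝ} (U : MixedUrn μ Y0 B0 a b g p)

/-- the Robbins-Siegmund style supermartingale -/
noncomputable def Z (n : ℕ) : Ω → ℝ := fun ω =>
  U.V n ω + (∑ j ∈ Finset.range n, U.sfn j ω) + ((a:ℝ)+b+g)^2/((n:ℝ)+1)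

lemma sfn_nonneg (hY0 : 0 < Y0) (hB0 : 0 < B0) (ha : 0 < a) (hb : 0 < b) (hg : 0 < g)
    (hp0 : 0 ≤ p) (j : ℕ) (ω : Ω) : 0 ≤ U.sfn j ω := by
  have hS := U.S_pos hY0 hB0 ha hb hg j ω
  have hV : 0 ≤ U.V j ω := sq_nonneg _
  have hd : (0:ℝ) < (U.S j ω : ℝ) + a + b := by
    have : (0:ℝ) ≤ (a:ℝ) := Nat.cast_nonneg _
    have : (0:ℝ) ≤ (b:ℝ) := Nat.cast_nonneg _
    linarith
  exact div_nonneg (by positivity) hd.le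

lemma sfn_le (hY0 : 0 < Y0) (hB0 : 0 < B0) (ha : 0 < a) (hb : 0 < b) (hg : 0 < g)
    (hp0 : 0 ≤ p) (j : ℕ) (ω : Ω) : U.sfn j ω ≤ 2*p*(b:ℝ) := by
  have hS := U.S_pos hY0 hB0 ha hb hg j ω
  have hb0 : (0:ℝ) ≤ (b:ℝ) := Nat.cast_nonneg _
  have ha0 : (0:ℝ) ≤ (a:ℝ) := Nat.cast_nonneg _
  have hV1 : U.V j ω ≤ 1 := (le_abs_self _).trans (U.V_bdd hY0 hB0 ha hb hg j ω)
  have hV0 : 0 ≤ U.V j ω := sq_nonneg _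
  have h2 : (2:ℝ) ≤ (U.S j ω : ℝ) + a + b := by
    have := U.S_lb hY0 hB0 ha hb hg j ω
    have : ((2:ℕ):ℝ) ≤ ((U.S j ω : ℕ):ℝ) := by exact_mod_cast (by omega : 2 ≤ U.S j ω)
    push_cast at this ⊢
    linarith
  calc U.sfn j ω = 4*p*(b:ℝ)*(U.V j ω)/((U.S j ω : ℝ)+a+b) := rfl
    _ ≤ (4*p*(b:ℝ))/2 := by
        apply div_le_div₀ (by positivity) ?_ (by norm_num) h2
        nlinarith [mul_le_mul_of_nonneg_left hV1 (by positivity : (0:ℝ) ≤ 4*p*(b:ℝ))]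
    _ = 2*p*(b:ℝ) := by ring

lemma sfn_abs_le (hY0 : 0 < Y0) (hB0 : 0 < B0) (ha : 0 < a) (hb : 0 < b) (hg : 0 < g)
    (hp0 : 0 ≤ p) (j : ℕ) (ω : Ω) : |U.sfn j ω| ≤ 2*p*(b:ℝ) := by
  rw [abs_of_nonneg (U.sfn_nonneg hY0 hB0 ha hb hg hp0 j ω)]
  exact U.sfn_le hY0 hB0 ha hb hg hp0 j ω

lemma measSfn (j : ℕ) : Measurable[U.F j] (U.sfn j) :=
  ((U.measV j).const_mul (4*p*(b:ℝ))).div (((U.measS j).add measurable_const).add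
    measurable_const)

lemma measZ (n : ℕ) : Measurable[U.F n] (U.Z n) := by
  refine (((U.measV n).add (Finset.measurable_sum _ fun j hj => ?_)).add measurable_const)
  exact (U.measSfn j).mono (U.F.mono (by simp at hj; omega)) le_rfl

lemma Z_nonneg (hY0 : 0 < Y0) (hB0 : 0 < B0) (ha : 0 < a) (hb : 0 < b) (hg : 0 < g)
    (hp0 : 0 ≤ p) (n : ℕ) (ω : Ω) : 0 ≤ U.Z n ω := by
  have h1 : 0 ≤ U.V n ω := sq_nonneg _
  have h2 : 0 ≤ ∑ j ∈ Finset.range n, U.sfn j ω :=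
    Finset.sum_nonneg fun j _ => U.sfn_nonneg hY0 hB0 ha hb hg hp0 j ω
  have h3 : (0:ℝ) ≤ ((a:ℝ)+b+g)^2/((n:ℝ)+1) := by positivity
  unfold Z; linarith

lemma Z_bdd (hY0 : 0 < Y0) (hB0 : 0 < B0) (ha : 0 < a) (hb : 0 < b) (hg : 0 < g)
    (hp0 : 0 ≤ p) (n : ℕ) (ω : Ω) : |U.Z n ω| ≤ 1 + n*(2*p*(b:ℝ)) + ((a:ℝ)+b+g)^2 := by
  rw [abs_of_nonneg (U.Z_nonneg hY0 hB0 ha hb hg hp0 n ω)]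
  have h1 : U.V n ω ≤ 1 := (le_abs_self _).trans (U.V_bdd hY0 hB0 ha hb hg n ω)
  have h2 : ∑ j ∈ Finset.range n, U.sfn j ω ≤ n*(2*p*(b:ℝ)) := by
    calc ∑ j ∈ Finset.range n, U.sfn j ω ≤ ∑ j ∈ Finset.range n, 2*p*(b:ℝ) :=
          Finset.sum_le_sum fun j _ => U.sfn_le hY0 hB0 ha hb hg hp0 j ω
      _ = n*(2*p*(b:ℝ)) := by rw [Finset.sum_const, Finset.card_range]; ring
  have h3 : ((a:ℝ)+b+g)^2/((n:ℝ)+1) ≤ ((a:ℝ)+b+g)^2 := by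
    apply div_le_self (by positivity)
    have : (0:ℝ) ≤ (n:ℝ) := Nat.cast_nonneg _
    linarith
  unfold Z; linarith

lemma intZ (hY0 : 0 < Y0) (hB0 : 0 < B0) (ha : 0 < a) (hb : 0 < b) (hg : 0 < g)
    (hp0 : 0 ≤ p) (n : ℕ) : Integrable (U.Z n) μ :=
  integrable_bdd ((U.measZ n).mono (U.F.le n) le_rfl).aestronglyMeasurable
    (U.Z_bdd hY0 hB0 ha hb hg hp0 n)

lemma Z_supermartingale (hY0 : 0 < Y0) (hB0 : 0 < B0) (ha : 0 < a) (hb : 0 < b)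
    (hg : 0 < g) (hp0 : 0 ≤ p) : Supermartingale U.Z U.F μ := by
  refine supermartingale_nat (fun n => (U.measZ n).stronglyMeasurable)
    (U.intZ hY0 hB0 ha hb hg hp0) fun n => ?_
  set K : ℝ := ((a:ℝ)+b+g)^2 with hK
  have hK0 : 0 ≤ K := by positivity
  -- split Z (n+1)
  have hCmeas : Measurable[U.F n]
      (fun ω => (∑ j ∈ Finset.range (n+1), U.sfn j ω) + K/((n:ℝ)+2)) := by
    refine (Finset.measurable_sum _ fun j hj => ?_).add measurable_const
    exact (U.measSfn j).mono (U.F.mono (by simp at hj; omega)) le_rfl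
  have hCbdd : ∀ ω, |(∑ j ∈ Finset.range (n+1), U.sfn j ω) + K/((n:ℝ)+2)|
      ≤ (n+1)*(2*p*(b:ℝ)) + K := by
    intro ω
    have h2 : ∑ j ∈ Finset.range (n+1), U.sfn j ω ≤ (n+1)*(2*p*(b:ℝ)) := by
      calc ∑ j ∈ Finset.range (n+1), U.sfn j ω ≤ ∑ j ∈ Finset.range (n+1), 2*p*(b:ℝ) :=
            Finset.sum_le_sum fun j _ => U.sfn_le hY0 hB0 ha hb hg hp0 j ω
        _ = (n+1)*(2*p*(b:ℝ)) := by
            rw [Finset.sum_const, Finset.card_range]; push_cast; ring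
    have h0 : 0 ≤ ∑ j ∈ Finset.range (n+1), U.sfn j ω :=
      Finset.sum_nonneg fun j _ => U.sfn_nonneg hY0 hB0 ha hb hg hp0 j ω
    have h3 : (0:ℝ) ≤ K/((n:ℝ)+2) := by positivity
    have h4 : K/((n:ℝ)+2) ≤ K := by
      apply div_le_self hK0
      have : (0:ℝ) ≤ (n:ℝ) := Nat.cast_nonneg _
      linarith
    rw [abs_of_nonneg (by linarith)]
    linarith
  have hCint : Integrable (fun ω => (∑ j ∈ Finset.range (n+1), U.sfn j ω) + K/((n:ℝ)+2)) μ :=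
    integrable_bdd ((hCmeas.mono (U.F.le n) le_rfl)).aestronglyMeasurable hCbdd
  have hsplit : U.Z (n+1) = U.V (n+1)
      + fun ω => (∑ j ∈ Finset.range (n+1), U.sfn j ω) + K/((n:ℝ)+2) := by
    funext ω
    simp only [Z, Pi.add_apply, hK]
    push_cast
    ring
  have hintV1 : Integrable (U.V (n+1)) μ :=
    U.intFk (k := n+1) (U.measV (n+1)) (U.V_bdd hY0 hB0 ha hb hg (n+1))
  have hadd := condExp_add (μ := μ) (m := (U.F n : MeasurableSpace Ω)) hintV1 hCint
  rw [← hsplit] at hadd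
  have hCeq : μ[fun ω => (∑ j ∈ Finset.range (n+1), U.sfn j ω) + K/((n:ℝ)+2)|U.F n]
      = fun ω => (∑ j ∈ Finset.range (n+1), U.sfn j ω) + K/((n:ℝ)+2) :=
    condExp_of_stronglyMeasurable (U.F.le n) hCmeas.stronglyMeasurable hCint
  have hVle := U.condexp_V_succ hY0 hB0 ha hb hg hp0 n
  -- numeric inequality
  have hx : (0:ℝ) ≤ (n:ℝ) := Nat.cast_nonneg _
  have hfrac : K/(((n:ℝ)+2)^2) + K/((n:ℝ)+2) ≤ K/((n:ℝ)+1) := by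
    have h1 : 1/(((n:ℝ)+2)^2) + 1/((n:ℝ)+2) ≤ 1/((n:ℝ)+1) := by
      rw [div_add_div _ _ (by positivity) (by positivity),
        div_le_div_iff₀ (by positivity) (by positivity)]
      nlinarith
    calc K/(((n:ℝ)+2)^2) + K/((n:ℝ)+2) = K*(1/(((n:ℝ)+2)^2) + 1/((n:ℝ)+2)) := by ring
      _ ≤ K*(1/((n:ℝ)+1)) := mul_le_mul_of_nonneg_left h1 hK0
      _ = K/((n:ℝ)+1) := by ring
  filter_upwards [hadd, hVle] with ω e1 e2
  have hCeq' : (μ[fun ω => (∑ j ∈ Finset.range (n+1), U.sfn j ω) + K/((n:ℝ)+2)|U.F n]) ω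
      = (∑ j ∈ Finset.range (n+1), U.sfn j ω) + K/((n:ℝ)+2) := by rw [hCeq]
  have hsumsucc : ∑ j ∈ Finset.range (n+1), U.sfn j ω
      = (∑ j ∈ Finset.range n, U.sfn j ω) + U.sfn n ω := Finset.sum_range_succ _ _
  have hZn : U.Z n ω = U.V n ω + (∑ j ∈ Finset.range n, U.sfn j ω) + K/((n:ℝ)+1) := rfl
  rw [e1, Pi.add_apply, hCeq', hsumsucc, hZn]
  have e2' := e2
  simp only [hK] at *
  linarith

end C8
end MixedUrn
namespace MixedUrn
section C9
set_option maxHeartbeats 1000000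
set_option linter.unusedSectionVars false
variable {Ω : Type*} [m0 : MeasurableSpace Ω] {μ : Measure Ω} [IsProbabilityMeasure μ]
  {Y0 B0 a b g : ℕ} {p : ℝ} (U : MixedUrn μ Y0 B0 a b g p)

lemma Z_converges (hY0 : 0 < Y0) (hB0 : 0 < B0) (ha : 0 < a) (hb : 0 < b) (hg : 0 < g)
    (hp0 : 0 ≤ p) :
    ∀ᵐ ω ∂μ, ∃ c, Tendsto (fun n => U.Z n ω) atTop (nhds c) := by
  have hsup := U.Z_supermartingale hY0 hB0 ha hb hg hp0
  have hsub : Submartingale (-U.Z) U.F μ := hsup.neg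
  have hint := U.intZ hY0 hB0 ha hb hg hp0
  have hZnn := U.Z_nonneg hY0 hB0 ha hb hg hp0
  set R : NNReal := (∫ ω, U.Z 0 ω ∂μ).toNNReal with hR
  have hmono : ∀ n, ∫ ω, U.Z n ω ∂μ ≤ ∫ ω, U.Z 0 ω ∂μ := by
    intro n
    have h := hsup.setIntegral_le (Nat.zero_le n) (MeasurableSet.univ)
    simpa [setIntegral_univ] using h
  have heq : ∀ n, eLpNorm (U.Z n) 1 μ = ENNReal.ofReal (∫ ω, U.Z n ω ∂μ) := by
    intro n
    rw [eLpNorm_one_eq_lintegral_enorm,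
      ofReal_integral_eq_lintegral_ofReal (hint n) (Filter.Eventually.of_forall (hZnn n))]
    refine lintegral_congr fun ω => ?_
    rw [Real.enorm_eq_ofReal (hZnn n ω)]
  have hbdd : ∀ n, eLpNorm ((-U.Z) n) 1 μ ≤ (R : ENNReal) := by
    intro n
    rw [show (-U.Z) n = -(U.Z n) from rfl, eLpNorm_neg, heq n]
    calc ENNReal.ofReal (∫ ω, U.Z n ω ∂μ) ≤ ENNReal.ofReal (∫ ω, U.Z 0 ω ∂μ) :=
          ENNReal.ofReal_le_ofReal (hmono n)
      _ = (R : ENNReal) := rfl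
  filter_upwards [hsub.exists_ae_tendsto_of_bdd hbdd] with ω hω
  obtain ⟨c, hc⟩ := hω
  refine ⟨-c, ?_⟩
  have : Tendsto (fun n => -((-U.Z) n ω)) atTop (nhds (-c)) := hc.neg
  simpa using this

lemma V_tendsto_zero (hY0 : 0 < Y0) (hB0 : 0 < B0) (ha : 0 < a) (hb : 0 < b) (hg : 0 < g)
    (hp : 0 < p) :
    ∀ᵐ ω ∂μ, Tendsto (fun n => U.V n ω) atTop (nhds 0) := by
  have hp0 : 0 ≤ p := hp.le
  filter_upwards [U.Z_converges hY0 hB0 ha hb hg hp0] with ω hω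
  obtain ⟨c, hc⟩ := hω
  set K : ℝ := ((a:ℝ)+b+g)^2 with hKdef
  set A : ℕ → ℝ := fun n => ∑ j ∈ Finset.range n, U.sfn j ω with hA
  have hsfnn : ∀ j, 0 ≤ U.sfn j ω := fun j => U.sfn_nonneg hY0 hB0 ha hb hg hp0 j ω
  have hAmono : Monotone A := monotone_nat_of_le_succ fun n => by
    simp only [hA, Finset.sum_range_succ]
    linarith [hsfnn n]
  obtain ⟨M, hM⟩ := hc.bddAbove_range
  simp only [mem_upperBounds] at hM
  have hMZ : ∀ n, U.Z n ω ≤ M := fun n => hM _ ⟨n, rfl⟩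
  have hAZ : ∀ n, A n ≤ U.Z n ω := fun n => by
    have h1 : 0 ≤ U.V n ω := sq_nonneg _
    have h2 : (0:ℝ) ≤ K/((n:ℝ)+1) := by positivity
    show A n ≤ U.V n ω + A n + K/((n:ℝ)+1)
    linarith
  have hAM : ∀ n, A n ≤ M := fun n => (hAZ n).trans (hMZ n)
  have hsummable : Summable (fun j => U.sfn j ω) := summable_of_sum_range_le hsfnn hAM
  have hAbdd : BddAbove (Set.range A) := ⟨M, by rintro x ⟨n, rfl⟩; exact hAM n⟩
  have hAconv := tendsto_atTop_ciSup hAmono hAbdd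
  set l := ⨆ n, A n with hl
  have hKtend : Tendsto (fun n : ℕ => K/((n:ℝ)+1)) atTop (nhds 0) := by
    have h := tendsto_one_div_add_atTop_nhds_zero_nat.const_mul K
    simpa [mul_one_div, mul_zero, div_eq_mul_inv] using h
  have hVfun : (fun n => U.Z n ω - A n - K/((n:ℝ)+1)) = fun n => U.V n ω := by
    funext n
    show U.V n ω + A n + K/((n:ℝ)+1) - A n - K/((n:ℝ)+1) = U.V n ω
    ring
  have hVconv : Tendsto (fun n => U.V n ω) atTop (nhds (c - l - 0)) := by
    rw [← hVfun]
    exact (hc.sub hAconv).sub hKtend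
  set L : ℝ := c - l - 0 with hL
  have hL0 : 0 ≤ L := ge_of_tendsto' hVconv fun n => sq_nonneg _
  have hLle : L ≤ 0 := by
    by_contra hpos
    push_neg at hpos
    -- eventually V ≥ L/2
    have hev : ∀ᶠ n in atTop, L/2 ≤ U.V n ω :=
      hVconv.eventually (eventually_ge_nhds (by linarith))
    obtain ⟨N, hN⟩ := Filter.eventually_atTop.1 hev
    set M2 : ℝ := (Y0:ℝ)+B0+a+b+g+a+b with hM2
    have hM2pos : 0 < M2 := by
      have : (0:ℝ) < (Y0:ℝ) := by exact_mod_cast hY0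
      have h2 : (0:ℝ) ≤ (B0:ℝ) := Nat.cast_nonneg _
      have h3 : (0:ℝ) ≤ (a:ℝ) := Nat.cast_nonneg _
      have h4 : (0:ℝ) ≤ (b:ℝ) := Nat.cast_nonneg _
      have h5 : (0:ℝ) ≤ (g:ℝ) := Nat.cast_nonneg _
      linarith
    have hS2 : ∀ k : ℕ, (U.S k ω : ℝ) + a + b ≤ M2*((k:ℝ)+1) := by
      intro k
      have h := U.S_ub k ω
      have hcast : (U.S k ω : ℝ) ≤ (Y0:ℝ)+B0+(k:ℝ)*((a:ℝ)+b+g) := by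
        exact_mod_cast h
      have hk0 : (0:ℝ) ≤ (k:ℝ) := Nat.cast_nonneg _
      have habg : (a:ℝ)+b+g ≤ M2 := by
        have : (0:ℝ) ≤ (Y0:ℝ) := Nat.cast_nonneg _
        have h2 : (0:ℝ) ≤ (B0:ℝ) := Nat.cast_nonneg _
        have h3 : (0:ℝ) ≤ (a:ℝ) := Nat.cast_nonneg _
        have h4 : (0:ℝ) ≤ (b:ℝ) := Nat.cast_nonneg _
        simp only [hM2]
        linarith
      have hmul : (k:ℝ)*((a:ℝ)+b+g) ≤ (k:ℝ)*M2 := mul_le_mul_of_nonneg_left habg hk0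
      have hrest : (Y0:ℝ)+B0+a+b ≤ M2 := by
        have h5 : (0:ℝ) ≤ (g:ℝ) := Nat.cast_nonneg _
        have h3 : (0:ℝ) ≤ (a:ℝ) := Nat.cast_nonneg _
        have h4 : (0:ℝ) ≤ (b:ℝ) := Nat.cast_nonneg _
        simp only [hM2]; linarith
      nlinarith
    set c0 : ℝ := 2*p*(b:ℝ)*L/M2 with hc0def
    have hbpos : (0:ℝ) < (b:ℝ) := by exact_mod_cast hb
    have hc0 : 0 < c0 := by positivity
    have hlow : ∀ k, N ≤ k → c0 * (1/((k:ℝ)+1)) ≤ U.sfn k ω := by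
      intro k hk
      have hVk := hN k hk
      have hSpos := U.S_pos hY0 hB0 ha hb hg k ω
      have hdenpos : (0:ℝ) < (U.S k ω : ℝ) + a + b := by
        have h3 : (0:ℝ) ≤ (a:ℝ) := Nat.cast_nonneg _
        have h4 : (0:ℝ) ≤ (b:ℝ) := Nat.cast_nonneg _
        linarith
      have hkey : (2*p*(b:ℝ)*L) / (M2*((k:ℝ)+1)) ≤ 4*p*(b:ℝ)*(U.V k ω)/((U.S k ω : ℝ)+a+b) := by
        apply div_le_div₀ (mul_nonneg (by positivity) (sq_nonneg _)) ?_ hdenpos (hS2 k)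
        have hVk' : L/2 ≤ (urnX U.Y U.B k ω - 1/2)^2 := hVk
        nlinarith [mul_le_mul_of_nonneg_left hVk' (by positivity : (0:ℝ) ≤ 4*p*(b:ℝ))]
      calc c0 * (1/((k:ℝ)+1)) = (2*p*(b:ℝ)*L) / (M2*((k:ℝ)+1)) := by
            rw [hc0def]; field_simp
        _ ≤ 4*p*(b:ℝ)*(U.V k ω)/((U.S k ω : ℝ)+a+b) := hkey
        _ = U.sfn k ω := rfl
    have hsum_shift : Summable (fun k => U.sfn (k+N) ω) :=
      (summable_nat_add_iff (f := fun j => U.sfn j ω) N).2 hsummable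
    have hcomp : Summable (fun k : ℕ => c0 * (1/(((k+N:ℕ):ℝ)+1))) := by
      refine Summable.of_nonneg_of_le (fun k => by positivity) (fun k => ?_) hsum_shift
      exact hlow (k+N) (Nat.le_add_left N k)
    have hsum1 : Summable (fun k : ℕ => 1/(((k+N:ℕ):ℝ)+1)) :=
      (summable_mul_left_iff (ne_of_gt hc0)).1 hcomp
    have hsum2 : Summable (fun k : ℕ => 1/((k:ℝ)+1)) := by
      refine (summable_nat_add_iff (f := fun k : ℕ => 1/((k:ℝ)+1)) N).1 ?_
      exact hsum1
    have hns : ¬ Summable (fun k : ℕ => 1/((k:ℝ)+1)) := by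
      intro hs
      have h1 : Summable (fun k : ℕ => 1/(((k+1:ℕ)):ℝ)) := by
        refine hs.congr fun k => ?_
        push_cast
        ring
      exact Real.not_summable_one_div_natCast ((summable_nat_add_iff (f := fun n : ℕ => 1/(n:ℝ)) 1).1 h1)
    exact hns hsum2
  have : L = 0 := le_antisymm hLle hL0
  rw [this] at hVconv
  exact hVconv

end C9
end MixedUrn

/-- For any positive integers `Y₀, B₀, α, β, γ` and any `p ∈ (0,1]`, the proportion of
yellow balls `X n` in the mixed Friedman–Pólya urn converges almost surely to `1/2`. -/
theorem friedman_vs_polya {Ω : Type*} [MeasurableSpace Ω] (μ : Measure Ω)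
    [IsProbabilityMeasure μ] (Y0 B0 a b g : ℕ) (p : ℝ)
    (hY0 : 0 < Y0) (hB0 : 0 < B0) (ha : 0 < a) (hb : 0 < b) (hg : 0 < g)
    (hp : 0 < p) (hp1 : p ≤ 1) (U : MixedUrn μ Y0 B0 a b g p) :
    ∀ᵐ ω ∂μ, Tendsto (fun n => urnX U.Y U.B n ω) atTop (nhds (1 / 2)) := by
  filter_upwards [U.V_tendsto_zero hY0 hB0 ha hb hg hp] with ω hV
  have hsqrt : Tendsto (fun n => Real.sqrt (U.V n ω)) atTop (nhds 0) := by
    have hcont := Real.continuous_sqrt.tendsto 0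
    rw [Real.sqrt_zero] at hcont
    exact hcont.comp hV
  have habs : Tendsto (fun n => |urnX U.Y U.B n ω - 1/2|) atTop (nhds 0) := by
    refine hsqrt.congr fun n => ?_
    rw [show U.V n ω = (urnX U.Y U.B n ω - 1/2)^2 from rfl, Real.sqrt_sq_eq_abs]
  have hdiff : Tendsto (fun n => urnX U.Y U.B n ω - 1/2) atTop (nhds 0) :=
    (tendsto_zero_iff_abs_tendsto_zero _).2 habs
  have hfin := hdiff.add_const (1/2)
  simpa using hfin
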